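/- For λ ∈ ℂ \ {-2, -1+√2, -1-√2} and s a fixed square root of λ^2+2λ-1, the associated polynomials of Θ₁ satisfy p_n(λ) = (1/(λ+2))·sin(3πn/4) + 2^{-n/2-1}·[(λ+1+s)^n + (λ+1-s)^n + ((λ^2+3λ+1)/((λ+2)s))·((λ+1+s)^n - (λ+1-s)^n)] for all n ≥ 0. -/

import Mathlib

open Real Complex

lemma sin_shift34 (x : ℝ) : Real.sin (x + 3*Real.pi/4) = Real.sqrt 2/2 * (Real.cos x - Real.sin x) := by
  rw [show x + 3*Real.pi/4 = x + (Real.pi - Real.pi/4) by ring]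
  rw [Real.sin_add, Real.sin_pi_sub, Real.cos_pi_sub, Real.sin_pi_div_four, Real.cos_pi_div_four]
  ring

lemma sin_shift32 (x : ℝ) : Real.sin (x + 3*Real.pi/2) = -Real.cos x := by
  rw [show x + 3*Real.pi/2 = (x + Real.pi/2) + Real.pi by ring, Real.sin_add_pi,
    Real.sin_add_pi_div_two]

lemma sin_shift94 (x : ℝ) : Real.sin (x + 9*Real.pi/4) = Real.sqrt 2/2 * (Real.sin x + Real.cos x) := by
  rw [show x + 9*Real.pi/4 = (x + Real.pi/4) + 2*Real.pi by ring, Real.sin_add_two_pi,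
    Real.sin_add, Real.sin_pi_div_four, Real.cos_pi_div_four]
  ring

lemma sin_shift3pi (x : ℝ) : Real.sin (x + 3*Real.pi) = -Real.sin x := by
  rw [show x + 3*Real.pi = (x + Real.pi) + 2*Real.pi by ring, Real.sin_add_two_pi, Real.sin_add_pi]

lemma rpow_half_aux (n : ℕ) : (2:ℝ) ^ (-(n : ℝ)/2 - 1) = 1/2 * ((Real.sqrt 2)⁻¹)^n := by
  induction n with
  | zero => norm_num
  | succ k ih =>
    have h : (-((k:ℝ)+1)/2 - 1) = (-(k:ℝ)/2 - 1) + (-(1:ℝ)/2) := by ring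
    push_cast
    rw [h, Real.rpow_add (by norm_num : (0:ℝ) < 2), ih]
    have h2 : (2:ℝ) ^ (-(1:ℝ)/2) = (Real.sqrt 2)⁻¹ := by
      rw [show (-(1:ℝ)/2) = -(1/2) by ring, Real.rpow_neg (by norm_num : (0:ℝ) ≤ 2),
        ← Real.sqrt_eq_rpow]
    rw [h2]; ring

theorem p_explicit_representation
    (p : ℕ → ℂ → ℂ)
    (hp0 : ∀ z : ℂ, p 0 z = 1)
    (hp1 : ∀ z : ℂ, p 1 z = (Real.sqrt 2 : ℂ) * z + (Real.sqrt 2 : ℂ))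
    (hrec0 : ∀ z : ℂ, -(2 * z * p 0 z) - (Real.sqrt 2 : ℂ) * z * p 1 z + p 2 z = 0)
    (hrec1 : ∀ z : ℂ, -((Real.sqrt 2 : ℂ) * z * p 0 z) - 2 * z * p 1 z
      - (Real.sqrt 2 : ℂ) * z * p 2 z + p 3 z = 0)
    (hrec : ∀ (n : ℕ) (z : ℂ), p n z - (Real.sqrt 2 : ℂ) * z * p (n+1) z - 2 * z * p (n+2) z
      - (Real.sqrt 2 : ℂ) * z * p (n+3) z + p (n+4) z = 0)
    (l s : ℂ)
    (hl2 : l ≠ -2)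
    (hl3 : l ≠ -1 + (Real.sqrt 2 : ℂ))
    (hl4 : l ≠ -1 - (Real.sqrt 2 : ℂ))
    (hs : s ^ 2 = l ^ 2 + 2 * l - 1) :
    ∀ n : ℕ,
      p n l = (1 / (l + 2)) * (Real.sin (3 * Real.pi * n / 4) : ℂ)
        + (((2 : ℝ) ^ (-(n : ℝ) / 2 - 1) : ℝ) : ℂ) *
          ((l + 1 + s) ^ n + (l + 1 - s) ^ n
            + ((l ^ 2 + 3 * l + 1) / ((l + 2) * s)) * ((l + 1 + s) ^ n - (l + 1 - s) ^ n)) := by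
  set t : ℂ := (Real.sqrt 2 : ℂ) with htdef
  have ht : t ^ 2 = 2 := by
    rw [htdef]
    norm_cast
    rw [Real.sq_sqrt (by norm_num : (0:ℝ) ≤ 2)]
  have ht0 : t ≠ 0 := by
    intro h
    rw [h] at ht; norm_num at ht
  have hl2' : l + 2 ≠ 0 := fun h => hl2 (by linear_combination h)
  have hs0 : s ≠ 0 := by
    intro h
    have h2 : (l + 1 - t) * (l + 1 + t) = 0 := by
      linear_combination -hs - ht + s * h
    rcases mul_eq_zero.1 h2 with h3 | h3
    · exact hl3 (by linear_combination h3)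
    · exact hl4 (by linear_combination h3)
  set C : ℂ := (l ^ 2 + 3 * l + 1) / ((l + 2) * s) with hCdef
  set a : ℂ := (l + 1 + s) * (t/2) with hadef
  set b : ℂ := (l + 1 - s) * (t/2) with hbdef
  have ha : a ^ 2 = t * (l + 1) * a - 1 := by
    rw [hadef]
    linear_combination (1/2) * hs + ((l+1+s)^2/4 - (l+1)*(l+1+s)/2) * ht
  have hb : b ^ 2 = t * (l + 1) * b - 1 := by
    rw [hbdef]
    linear_combination (1/2) * hs + ((l+1-s)^2/4 - (l+1)*(l+1-s)/2) * ht
  have hapb : a + b = t * (l + 1) := by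
    rw [hadef, hbdef]; ring
  have hamb : a - b = t * s := by
    rw [hadef, hbdef]; ring
  have hCs : C * s = (l ^ 2 + 3 * l + 1) / (l + 2) := by
    rw [hCdef]; field_simp
  have hS1 : (1 + C) * a ^ 1 + (1 - C) * b ^ 1
      = t * (l + 1) + t * ((l ^ 2 + 3 * l + 1) / (l + 2)) := by
    linear_combination hapb + C * hamb + t * hCs
  have hS2 : (1 + C) * a ^ 2 + (1 - C) * b ^ 2
      = t * (l + 1) * ((1 + C) * a ^ 1 + (1 - C) * b ^ 1) - 2 := by
    linear_combination (1 + C) * ha + (1 - C) * hb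
  have hS3 : (1 + C) * a ^ 3 + (1 - C) * b ^ 3
      = t * (l + 1) * ((1 + C) * a ^ 2 + (1 - C) * b ^ 2)
        - ((1 + C) * a ^ 1 + (1 - C) * b ^ 1) := by
    linear_combination (1 + C) * a * ha + (1 - C) * b * hb
  have hp2v : p 2 l = 2 * l + t * l * (t * l + t) := by
    have h := hrec0 l
    rw [hp0, hp1] at h
    linear_combination h
  have hp3v : p 3 l = t * l + 2 * l * (t * l + t) + t * l * (2 * l + t * l * (t * l + t)) := by
    have h := hrec1 l
    rw [hp0, hp1, hp2v] at h
    linear_combination h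
  have key : ∀ m : ℕ, p m l = (1/(l+2)) * (Real.sin (3 * Real.pi * m / 4) : ℂ)
      + 1/2 * ((1 + C) * a ^ m + (1 - C) * b ^ m) := by
    have H : ∀ m : ℕ, (p m l = (1/(l+2)) * (Real.sin (3 * Real.pi * (m:ℝ) / 4) : ℂ)
        + 1/2 * ((1 + C) * a ^ m + (1 - C) * b ^ m))
        ∧ (p (m+1) l = (1/(l+2)) * (Real.sin (3 * Real.pi * (m:ℝ) / 4 + 3*Real.pi/4) : ℂ)
        + 1/2 * ((1 + C) * a ^ (m+1) + (1 - C) * b ^ (m+1)))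
        ∧ (p (m+2) l = (1/(l+2)) * (Real.sin (3 * Real.pi * (m:ℝ) / 4 + 3*Real.pi/2) : ℂ)
        + 1/2 * ((1 + C) * a ^ (m+2) + (1 - C) * b ^ (m+2)))
        ∧ (p (m+3) l = (1/(l+2)) * (Real.sin (3 * Real.pi * (m:ℝ) / 4 + 9*Real.pi/4) : ℂ)
        + 1/2 * ((1 + C) * a ^ (m+3) + (1 - C) * b ^ (m+3))) := by
      intro m
      induction m with
      | zero =>
        refine ⟨?_, ?_, ?_, ?_⟩
        · rw [hp0]
          norm_num
        · simp only [Nat.zero_add]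
          rw [hp1]
          rw [show (3 * Real.pi * ((0:ℕ):ℝ) / 4 + 3*Real.pi/4 : ℝ) = Real.pi - Real.pi/4
              by push_cast; ring,
            Real.sin_pi_sub, Real.sin_pi_div_four]
          rw [hS1]
          push_cast
          rw [← htdef]
          field_simp
          ring
        · simp only [Nat.zero_add]
          rw [hp2v]
          rw [show (3 * Real.pi * ((0:ℕ):ℝ) / 4 + 3*Real.pi/2 : ℝ) = Real.pi/2 + Real.pi
              by push_cast; ring,
            Real.sin_add_pi, Real.sin_pi_div_two]
          rw [hS2, hS1]
          push_cast
          field_simp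
          linear_combination (norm := ring_nf) (-(l+2)*(2*l+3)*(l+1) + (2*l^3+7*l^2+8*l+3)) * ht
        · simp only [Nat.zero_add]
          rw [hp3v]
          rw [show (3 * Real.pi * ((0:ℕ):ℝ) / 4 + 9*Real.pi/4 : ℝ) = Real.pi/4 + 2*Real.pi
              by push_cast; ring,
            Real.sin_add_two_pi, Real.sin_pi_div_four]
          rw [hS3, hS2, hS1]
          push_cast
          rw [← htdef]
          field_simp
          linear_combination (norm := ring_nf)
            (-t*(8*l^4 + 42*l^3 + 76*l^2 + 54*l + 12) - (3+12*l+13*l^2+4*l^3) + t*(12+54*l+76*l^2+42*l^3+8*l^4)) * ht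
      | succ m ih =>
        obtain ⟨q0, q1, q2, q3⟩ := ih
        refine ⟨?_, ?_, ?_, ?_⟩
        · rw [show (3 * Real.pi * ((m+1:ℕ):ℝ) / 4 : ℝ)
              = 3 * Real.pi * (m:ℝ) / 4 + 3*Real.pi/4 by push_cast; ring]
          exact q1
        · rw [show (3 * Real.pi * ((m+1:ℕ):ℝ) / 4 + 3*Real.pi/4 : ℝ)
              = 3 * Real.pi * (m:ℝ) / 4 + 3*Real.pi/2 by push_cast; ring]
          exact q2
        · rw [show (3 * Real.pi * ((m+1:ℕ):ℝ) / 4 + 3*Real.pi/2 : ℝ)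
              = 3 * Real.pi * (m:ℝ) / 4 + 9*Real.pi/4 by push_cast; ring]
          exact q3
        · rw [show m+1+3 = m+4 by omega]
          rw [show (3 * Real.pi * ((m+1:ℕ):ℝ) / 4 + 9*Real.pi/4 : ℝ)
              = 3 * Real.pi * (m:ℝ) / 4 + 3*Real.pi by push_cast; ring,
            sin_shift3pi]
          have h4 : p (m+4) l = t * l * p (m+3) l + 2 * l * p (m+2) l + t * l * p (m+1) l
              - p m l := by
            linear_combination hrec m l
          rw [h4, q0, q1, q2, q3]
          rw [sin_shift34, sin_shift32, sin_shift94]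
          push_cast [-Complex.ofReal_cos, -Complex.ofReal_sin]
          simp only [← htdef]
          linear_combination (norm := ring_nf)
            (1/(l+2)) * l * ((Real.cos (3*Real.pi*(m:ℝ)/4) : ℂ)) * ht
            - (1/2)*(1+C)*(l+1)*a^(m+2)*ht - (1/2)*(1-C)*(l+1)*b^(m+2)*ht
            - (1/2)*(1+C)*a^m*(a^2+t*a+1)*ha - (1/2)*(1-C)*b^m*(b^2+t*b+1)*hb
    intro m
    have h := (H m).1
    rw [h]
  intro n
  rw [key n]
  have hc : (((2:ℝ) ^ (-(n:ℝ)/2 - 1) : ℝ) : ℂ) = 1/2 * (t/2)^n := by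
    rw [rpow_half_aux]
    push_cast
    rw [← htdef]
    have hinv : t⁻¹ = t/2 := by
      field_simp
      linear_combination -ht
    rw [hinv]
  rw [hc, hadef, hbdef, mul_pow, mul_pow]
  ring
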